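/- Let (P, Ω) be a poset equipped with an ℝ-flow and let F be a family of intervals in P that contains the empty interval, is closed under pairwise intersections, and is closed under the action of Ω. Let M, N : P → Vect_K be interval-decomposable P-modules whose barcodes satisfy B(M) ⊆ F and B(N) ⊆ F. Then d_H(M, N) ≤ 2 · d_I(M, N). -/

import Mathlib

open CategoryTheory
open scoped Classical ENNReal NNReal

set_option linter.unusedSectionVars false
set_option linter.unusedVariables false

/-! ## Posets, intervals, flows -/

variable {P : Type} [PartialOrder P]

/-- A subset of a poset is poset-convex if it contains every point between two of its points. -/
def PosetConvex (I : Set P) : Prop :=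
  ∀ ⦃p q r : P⦄, p ∈ I → q ∈ I → p ≤ r → r ≤ q → r ∈ I

/-- A subset of a poset is poset-connected if any two of its points are joined by a
zigzag path inside the subset. -/
def PosetConnected (I : Set P) : Prop :=
  ∀ p ∈ I, ∀ q ∈ I,
    Relation.ReflTransGen (fun a b => b ∈ I ∧ (a ≤ b ∨ b ≤ a)) p q

/-- An interval in a poset is a poset-convex and poset-connected subset. -/
def IsInterval (I : Set P) : Prop := PosetConvex I ∧ PosetConnected I

/-- `Q` is a poset-connected component of `U`: a poset-connected subset of `U`, maximal with
respect to inclusion among poset-connected subsets of `U`. -/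
def IsPosetComponent (U Q : Set P) : Prop :=
  Q ⊆ U ∧ PosetConnected Q ∧
    ∀ Q' : Set P, Q' ⊆ U → PosetConnected Q' → Q ⊆ Q' → Q' = Q

/-- A subset `Q` of `I ∩ J` is `(I,J)`-valid. -/
def IsValid (I J Q : Set P) : Prop :=
  ∀ p ∈ Q, (∀ q ∈ I, q ≤ p → q ∈ J) ∧ (∀ r ∈ J, p ≤ r → r ∈ I)

/-- An `ℝ`-flow on a poset. -/
structure RFlow (P : Type) [PartialOrder P] where
  Ω : ℝ → P → P
  mono : ∀ t : ℝ, Monotone (Ω t)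
  mono_param : ∀ {t s : ℝ}, t ≤ s → ∀ p : P, Ω t p ≤ Ω s p
  add : ∀ t s : ℝ, ∀ p : P, Ω (t + s) p = Ω t (Ω s p)
  zero : ∀ p : P, Ω 0 p = p

/-- The `t`-shift `I(t)` of a subset of a poset with an `ℝ`-flow. -/
def RFlow.shiftSet (Φ : RFlow P) (I : Set P) (t : ℝ) : Set P := {p : P | Φ.Ω t p ∈ I}

lemma RFlow.self_le (Φ : RFlow P) {t : ℝ} (ht : 0 ≤ t) (p : P) : p ≤ Φ.Ω t p := by
  have h := Φ.mono_param ht p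
  rwa [Φ.zero] at h

lemma RFlow.self_le_twice (Φ : RFlow P) {t : ℝ} (ht : 0 ≤ t) (p : P) :
    p ≤ Φ.Ω t (Φ.Ω t p) :=
  (Φ.self_le ht p).trans (Φ.self_le ht _)

lemma RFlow.omega_neg_omega (Φ : RFlow P) (t : ℝ) (p : P) : Φ.Ω (-t) (Φ.Ω t p) = p := by
  have h := Φ.add (-t) t p
  rw [neg_add_cancel, Φ.zero] at h
  exact h.symm

lemma RFlow.omega_omega_neg (Φ : RFlow P) (t : ℝ) (p : P) : Φ.Ω t (Φ.Ω (-t) p) = p := by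
  have h := Φ.add t (-t) p
  rw [add_neg_cancel, Φ.zero] at h
  exact h.symm

lemma RFlow.posetConvex_shiftSet (Φ : RFlow P) {I : Set P} (hI : PosetConvex I) (t : ℝ) :
    PosetConvex (Φ.shiftSet I t) := by
  intro p q r hp hq hpr hrq
  exact hI hp hq (Φ.mono t hpr) (Φ.mono t hrq)

lemma RFlow.posetConnected_shiftSet (Φ : RFlow P) {I : Set P} (hI : PosetConnected I) (t : ℝ) :
    PosetConnected (Φ.shiftSet I t) := by
  intro p hp q hq
  have h := hI _ hp _ hq
  have h2 := Relation.ReflTransGen.lift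
    (p := fun a b : P => b ∈ Φ.shiftSet I t ∧ (a ≤ b ∨ b ≤ a)) (fun x : P => Φ.Ω (-t) x)
    (fun a b hab => ⟨show Φ.Ω t (Φ.Ω (-t) b) ∈ I by rw [Φ.omega_omega_neg]; exact hab.1,
      hab.2.imp (fun h' => Φ.mono (-t) h') (fun h' => Φ.mono (-t) h')⟩) _ _ h
  simpa only [Function.onFun, Φ.omega_neg_omega] using h2

lemma RFlow.isInterval_shiftSet (Φ : RFlow P) {I : Set P} (hI : IsInterval I) (t : ℝ) :
    IsInterval (Φ.shiftSet I t) :=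
  ⟨Φ.posetConvex_shiftSet hI.1 t, Φ.posetConnected_shiftSet hI.2 t⟩

lemma RFlow.shiftSet_nonempty (Φ : RFlow P) {I : Set P} (hI : I.Nonempty) (t : ℝ) :
    (Φ.shiftSet I t).Nonempty := by
  obtain ⟨x, hx⟩ := hI
  exact ⟨Φ.Ω (-t) x, show Φ.Ω t (Φ.Ω (-t) x) ∈ I by rw [Φ.omega_omega_neg]; exact hx⟩

/-! ## Characteristic (interval) persistence modules -/

variable (K : Type) [Field K]

/-- The pointwise value of the characteristic module of `I`, as a submodule of `K`. -/
noncomputable def charSub (I : Set P) (p : P) : Submodule K K :=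
  if p ∈ I then ⊤ else ⊥

lemma charSub_eq_top {I : Set P} {p : P} (hp : p ∈ I) : charSub K I p = ⊤ := if_pos hp

lemma charSub_eq_bot {I : Set P} {p : P} (hp : p ∉ I) : charSub K I p = ⊥ := if_neg hp

lemma charElt_eq_zero {I : Set P} {p : P} (hp : p ∉ I) (x : ↥(charSub K I p)) : x = 0 := by
  exact Subtype.ext ((Submodule.eq_bot_iff _).mp (charSub_eq_bot K hp) (x : K) x.2)

/-- The structure maps of the characteristic module of `I`. -/
noncomputable def charMap (I : Set P) (p q : P) :
    ↥(charSub K I p) →ₗ[K] ↥(charSub K I q) :=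
  if h : p ∈ I ∧ q ∈ I then
    { toFun := fun x => ⟨(x : K), by rw [charSub_eq_top K h.2]; exact Submodule.mem_top⟩
      map_add' := fun x y => rfl
      map_smul' := fun c x => rfl }
  else 0

lemma charMap_id (I : Set P) (p : P) : charMap K I p p = LinearMap.id := by
  by_cases hp : p ∈ I
  · simp only [charMap, dif_pos (And.intro hp hp)]
    rfl
  · ext x
    rw [charElt_eq_zero K hp x]
    simp

lemma charMap_comp {I : Set P} (hI : PosetConvex I) {p q r : P} (hpq : p ≤ q) (hqr : q ≤ r) :
    (charMap K I q r).comp (charMap K I p q) = charMap K I p r := by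
  by_cases hp : p ∈ I
  · by_cases hr : r ∈ I
    · have hq : q ∈ I := hI hp hr hpq hqr
      ext x
      simp only [charMap, dif_pos (And.intro hp hq), dif_pos (And.intro hq hr),
        dif_pos (And.intro hp hr), LinearMap.comp_apply, LinearMap.coe_mk, AddHom.coe_mk]
    · ext x
      exact congrArg Subtype.val
        ((charElt_eq_zero K hr ((charMap K I q r).comp (charMap K I p q) x)).trans
          (charElt_eq_zero K hr (charMap K I p r x)).symm)
  · ext x
    rw [charElt_eq_zero K hp x]
    simp

/-- The characteristic persistence module `C(I)` of a poset-convex subset `I`. -/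
noncomputable def charMod (I : Set P) (hI : PosetConvex I) : P ⥤ ModuleCat K where
  obj p := ModuleCat.of K ↥(charSub K I p)
  map {p q} h := ModuleCat.ofHom (charMap K I p q)
  map_id p := ModuleCat.hom_ext (charMap_id K I p)
  map_comp {p q r} h1 h2 := ModuleCat.hom_ext (charMap_comp K hI (leOfHom h1) (leOfHom h2)).symm

/-- The zero persistence module, realized as the characteristic module of the empty interval. -/
noncomputable def zeroPMod : P ⥤ ModuleCat K :=
  charMod K (∅ : Set P) (fun _ _ _ hp _ _ _ => absurd hp (Set.notMem_empty _))

/-! ## Barcodes and interval-decomposable modules -/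

/-- A barcode over a poset: a multiset of nonempty intervals, encoded as an indexed family. -/
structure Barcode (P : Type) [PartialOrder P] where
  ι : Type
  B : ι → Set P
  interval : ∀ a : ι, IsInterval (B a)
  nonempty : ∀ a : ι, (B a).Nonempty

/-- The interval-decomposable module `⊕_{a} C(B a)` associated to a barcode. -/
noncomputable def bcMod (D : Barcode P) : P ⥤ ModuleCat K where
  obj p := ModuleCat.of K (Π₀ a : D.ι, ↥(charSub K (D.B a) p))
  map {p q} h := ModuleCat.ofHom (DFinsupp.mapRange.linearMap (fun a => charMap K (D.B a) p q))
  map_id p := by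
    have h : (fun a : D.ι => charMap K (D.B a) p p)
        = fun a : D.ι => (LinearMap.id : ↥(charSub K (D.B a) p) →ₗ[K] ↥(charSub K (D.B a) p)) := by
      funext a; exact charMap_id K (D.B a) p
    apply ModuleCat.hom_ext
    show DFinsupp.mapRange.linearMap (fun a => charMap K (D.B a) p p) = LinearMap.id
    rw [h, DFinsupp.mapRange.linearMap_id]
  map_comp {p q r} h1 h2 := by
    have h : (fun a : D.ι => charMap K (D.B a) p r)
        = fun a : D.ι => (charMap K (D.B a) q r).comp (charMap K (D.B a) p q) := by
      funext a
      exact (charMap_comp K (D.interval a).1 (leOfHom h1) (leOfHom h2)).symm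
    apply ModuleCat.hom_ext
    show DFinsupp.mapRange.linearMap (fun a => charMap K (D.B a) p r) = _
    rw [h, DFinsupp.mapRange.linearMap_comp]
    rfl

/-- `M` is interval-decomposable with barcode `D`. -/
def IsDecompositionOf (D : Barcode P) (M : P ⥤ ModuleCat K) : Prop :=
  Nonempty (M ≅ bcMod K D)

/-- The shift of a barcode along a flow. -/
noncomputable def Barcode.shift (D : Barcode P) (Φ : RFlow P) (t : ℝ) : Barcode P where
  ι := D.ι
  B a := Φ.shiftSet (D.B a) t
  interval a := Φ.isInterval_shiftSet (D.interval a) t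
  nonempty a := Φ.shiftSet_nonempty (D.nonempty a) t

/-! ## Shifts of modules, interleavings, distances -/

/-- The shift `M(t)` of a persistence module along a flow. -/
noncomputable def Pshift (Φ : RFlow P) (t : ℝ) (M : P ⥤ ModuleCat K) : P ⥤ ModuleCat K :=
  (Φ.mono t).functor ⋙ M

/-- The ordered pair `(M, N)` is left `ε`-interleaved. -/
noncomputable def LeftInterleaved (Φ : RFlow P) {ε : ℝ} (hε : 0 ≤ ε)
    (M N : P ⥤ ModuleCat K) : Prop :=
  ∃ (f : M ⟶ Pshift K Φ ε N) (g : N ⟶ Pshift K Φ ε M),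
    ∀ p : P, f.app p ≫ g.app (Φ.Ω ε p) = M.map (homOfLE (Φ.self_le_twice hε p))

/-- `M` and `N` are `ε`-interleaved. -/
noncomputable def Interleaved (Φ : RFlow P) {ε : ℝ} (hε : 0 ≤ ε)
    (M N : P ⥤ ModuleCat K) : Prop :=
  ∃ (f : M ⟶ Pshift K Φ ε N) (g : N ⟶ Pshift K Φ ε M),
    (∀ p : P, f.app p ≫ g.app (Φ.Ω ε p) = M.map (homOfLE (Φ.self_le_twice hε p))) ∧
    (∀ p : P, g.app p ≫ f.app (Φ.Ω ε p) = N.map (homOfLE (Φ.self_le_twice hε p)))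

/-- The interleaving distance between two persistence modules. -/
noncomputable def dI (Φ : RFlow P) (M N : P ⥤ ModuleCat K) : ℝ≥0∞ :=
  ⨅ (ε : NNReal) (_ : Interleaved K Φ ε.coe_nonneg M N), (ε : ℝ≥0∞)

/-- An interval `I` is `t`-trivial if the transition morphism `C(I) → C(I(t))` vanishes. -/
noncomputable def IsTrivialIv (Φ : RFlow P) {t : ℝ} (ht : 0 ≤ t)
    (I : Set P) (hI : PosetConvex I) : Prop :=
  ∀ p : P, (charMod K I hI).map (homOfLE (Φ.self_le ht p)) = 0

/-- An `ε`-correspondence between two barcodes. -/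
noncomputable def IsCorrespondence (Φ : RFlow P) {ε : ℝ} (hε : 0 ≤ ε)
    (DM DN : Barcode P) (σ : Set (DM.ι × DN.ι)) : Prop :=
  (∀ ab ∈ σ, Interleaved K Φ hε
      (charMod K (DM.B ab.1) (DM.interval ab.1).1) (charMod K (DN.B ab.2) (DN.interval ab.2).1)) ∧
  (∀ a : DM.ι, (∀ b : DN.ι, (a, b) ∉ σ) →
      Interleaved K Φ hε (charMod K (DM.B a) (DM.interval a).1) (zeroPMod K)) ∧
  (∀ b : DN.ι, (∀ a : DM.ι, (a, b) ∉ σ) →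
      Interleaved K Φ hε (zeroPMod K) (charMod K (DN.B b) (DN.interval b).1))

/-- An `ε`-matching between two barcodes. -/
noncomputable def IsMatching (Φ : RFlow P) {ε : ℝ} (hε : 0 ≤ ε)
    (DM DN : Barcode P) (σ : Set (DM.ι × DN.ι)) : Prop :=
  IsCorrespondence K Φ hε DM DN σ ∧
  (∀ a b b', (a, b) ∈ σ → (a, b') ∈ σ → b = b') ∧
  (∀ a a' b, (a, b) ∈ σ → (a', b) ∈ σ → a = a')

/-- The Hausdorff distance between (modules with) barcodes `DM`, `DN`. -/
noncomputable def dH (Φ : RFlow P) (DM DN : Barcode P) : ℝ≥0∞ :=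
  ⨅ (ε : NNReal) (_ : ∃ σ : Set (DM.ι × DN.ι), IsCorrespondence K Φ ε.coe_nonneg DM DN σ),
    (ε : ℝ≥0∞)

/-- The bottleneck distance between (modules with) barcodes `DM`, `DN`. -/
noncomputable def dB (Φ : RFlow P) (DM DN : Barcode P) : ℝ≥0∞ :=
  ⨅ (ε : NNReal) (_ : ∃ σ : Set (DM.ι × DN.ι), IsMatching K Φ ε.coe_nonneg DM DN σ),
    (ε : ℝ≥0∞)



/-! ## Auxiliary machinery for the proof -/

section Aux

lemma charSub_val_zero {S : Set P} {x : P} (hx : x ∉ S) (u : ↥(charSub K S x)) :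
    (u : K) = 0 := by
  rw [charElt_eq_zero K hx u]; rfl

/-- Canonical generator of `charSub`. -/
noncomputable def unitE (S : Set P) (x : P) : ↥(charSub K S x) :=
  ⟨if x ∈ S then (1 : K) else 0, by
    by_cases h : x ∈ S
    · rw [charSub_eq_top K h]; trivial
    · rw [charSub_eq_bot K h, if_neg h]; exact Submodule.zero_mem _⟩

lemma unitE_val {S : Set P} {x : P} (hx : x ∈ S) : ((unitE K S x : ↥(charSub K S x)) : K) = 1 := by
  simp [unitE, hx]

lemma elt_eq_smul_unitE {S : Set P} {x : P} (hx : x ∈ S) (u : ↥(charSub K S x)) :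
    u = (u : K) • unitE K S x := by
  apply Subtype.ext
  simp [unitE, hx]

lemma charMap_val {S : Set P} (x y : P) (u : ↥(charSub K S x)) :
    ((charMap K S x y u : ↥(charSub K S y)) : K) = if x ∈ S ∧ y ∈ S then (u : K) else 0 := by
  by_cases h : x ∈ S ∧ y ∈ S
  · rw [if_pos h]; simp [charMap, h]
  · rw [if_neg h]; simp [charMap, h]

lemma charMap_unitE {S : Set P} {x y : P} (hx : x ∈ S) (hy : y ∈ S) :
    charMap K S x y (unitE K S x) = unitE K S y := by
  apply Subtype.ext
  rw [charMap_val, if_pos ⟨hx, hy⟩, unitE_val K hx, unitE_val K hy]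

lemma charMap_zero_of_not_mem {S : Set P} {x y : P} (h : ¬(x ∈ S ∧ y ∈ S)) :
    charMap K S x y = 0 := by
  simp [charMap, h]

/-- Conditional value-transfer map between characteristic stalks. -/
noncomputable def tmap {S T : Set P} (x y : P) (c : Prop) (hc : c → y ∈ T) :
    ↥(charSub K S x) →ₗ[K] ↥(charSub K T y) :=
  if h : c then
    { toFun := fun u => ⟨(u : K), by rw [charSub_eq_top K (hc h)]; trivial⟩
      map_add' := fun u v => rfl
      map_smul' := fun c u => rfl }
  else 0

lemma tmap_val {S T : Set P} (x y : P) (c : Prop) (hc : c → y ∈ T) (u : ↥(charSub K S x)) :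
    ((tmap K x y c hc u : ↥(charSub K T y)) : K) = if c then (u : K) else 0 := by
  by_cases h : c
  · rw [if_pos h]; simp [tmap, h]
  · rw [if_neg h]; simp [tmap, h]

lemma stalk_ext {S T : Set P} {x y : P} {f g : ↥(charSub K S x) →ₗ[K] ↥(charSub K T y)}
    (h : ∀ u, ((f u : ↥(charSub K T y)) : K) = ((g u : ↥(charSub K T y)) : K)) : f = g :=
  LinearMap.ext fun u => Subtype.ext (h u)

/-- Propagation of a predicate along zigzags in a poset-connected set. -/
lemma zigzag_prop {S : Set P} (hconn : PosetConnected S) {Q : P → Prop}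
    (hup : ∀ ⦃x y : P⦄, x ∈ S → y ∈ S → x ≤ y → Q x → Q y)
    (hdown : ∀ ⦃x y : P⦄, x ∈ S → y ∈ S → y ≤ x → Q x → Q y)
    {p q : P} (hp : p ∈ S) (hq : q ∈ S) (hQ : Q p) : Q q := by
  have h := hconn p hp q hq
  clear hq
  have key : q ∈ S ∧ Q q := by
    induction h with
    | refl => exact ⟨hp, hQ⟩
    | tail _ step ih =>
        obtain ⟨hmem, hcmp⟩ := step
        rcases hcmp with h1 | h2
        · exact ⟨hmem, hup ih.1 hmem h1 ih.2⟩
        · exact ⟨hmem, hdown ih.1 hmem h2 ih.2⟩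
  exact key.2

lemma RFlow.shiftSet_eq_image (Φ : RFlow P) (S : Set P) (t : ℝ) :
    Φ.shiftSet S t = Φ.Ω (-t) '' S := by
  ext x
  constructor
  · intro hx; exact ⟨Φ.Ω t x, hx, Φ.omega_neg_omega t x⟩
  · rintro ⟨y, hy, rfl⟩
    show Φ.Ω t (Φ.Ω (-t) y) ∈ S
    rw [Φ.omega_omega_neg]; exact hy

/-- Support condition for the forward canonical morphism. -/
def matchedF (Φ : RFlow P) (ε : ℝ) (A Jb : Set P) (z : P) : Prop :=
  z ∈ A ∧ Φ.Ω ε z ∈ Jb ∧ Φ.Ω ε (Φ.Ω ε z) ∈ Jb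

/-- Support condition for the backward canonical morphism. -/
def matchedG (Φ : RFlow P) (ε : ℝ) (A Jb : Set P) (z : P) : Prop :=
  z ∈ Jb ∧ Φ.Ω ε z ∈ Jb ∧ Φ.Ω ε (Φ.Ω ε z) ∈ A

end Aux

section Core

lemma ite_ite_and {c d : Prop} [Decidable c] [Decidable d] [Decidable (c ∧ d)] (u : K) :
    (if c then (if d then u else 0) else 0) = if c ∧ d then u else 0 := by
  by_cases hc : c <;> by_cases hd : d <;> simp [hc, hd]

lemma mcomp_apply {A B C : ModuleCat K} (f : A ⟶ B) (g : B ⟶ C) (u : A) :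
    (f ≫ g) u = g (f u) := rfl

/-- The core construction: from pointwise matrix-entry data of an interleaving with a
common nonvanishing point, build a `(ε+ε)`-interleaving of the two characteristic modules. -/
lemma core_interleave (Φ : RFlow P) {ε : ℝ} (hε : 0 ≤ ε)
    {A Jb : Set P} (hA : IsInterval A) (hJ : IsInterval Jb)
    (c1 : PosetConnected {z : P | z ∈ A ∧ Φ.Ω ε z ∈ Jb})
    (c2 : PosetConnected {z : P | z ∈ Jb ∧ Φ.Ω ε z ∈ A})
    (c3 : PosetConnected {z : P | z ∈ A ∧ Φ.Ω ε (Φ.Ω ε z) ∈ A})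
    (c4 : PosetConnected {z : P | z ∈ Jb ∧ Φ.Ω ε (Φ.Ω ε z) ∈ Jb})
    (U V : P → K)
    (hu1 : ∀ x y, x ≤ y → x ∈ A → y ∈ A →
      U y = if (Φ.Ω ε x ∈ Jb ∧ Φ.Ω ε y ∈ Jb) then U x else 0)
    (hu2 : ∀ x y, x ≤ y → x ∈ A → y ∉ A → Φ.Ω ε x ∈ Jb → Φ.Ω ε y ∈ Jb → U x = 0)
    (hv1 : ∀ x y, x ≤ y → x ∈ Jb → y ∈ Jb →
      V y = if (Φ.Ω ε x ∈ A ∧ Φ.Ω ε y ∈ A) then V x else 0)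
    (hv2 : ∀ x y, x ≤ y → x ∈ Jb → y ∉ Jb → Φ.Ω ε x ∈ A → Φ.Ω ε y ∈ A → V x = 0)
    (p₀ : P) (hpA : p₀ ∈ A) (hpJ : Φ.Ω ε p₀ ∈ Jb)
    (hp2 : Φ.Ω ε (Φ.Ω ε p₀) ∈ A)
    (hp4 : Φ.Ω ε (Φ.Ω ε (Φ.Ω ε (Φ.Ω ε p₀))) ∈ A)
    (hU0 : U p₀ ≠ 0) (hV0 : V (Φ.Ω ε p₀) ≠ 0) :
    Interleaved K Φ (add_nonneg hε hε) (charMod K A hA.1) (charMod K Jb hJ.1) := by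
  have le1 : ∀ x : P, x ≤ Φ.Ω ε x := fun x => Φ.self_le hε x
  have mono : ∀ {x y : P}, x ≤ y → Φ.Ω ε x ≤ Φ.Ω ε y := fun h => Φ.mono ε h
  -- nonvanishing of U on A ∩ B'
  have hUne : ∀ x, x ∈ A → Φ.Ω ε x ∈ Jb → U x ≠ 0 := by
    intro x hxA hxB
    refine zigzag_prop c1 (Q := fun z => U z ≠ 0) ?_ ?_
      (show p₀ ∈ _ from ⟨hpA, hpJ⟩) (show x ∈ _ from ⟨hxA, hxB⟩) hU0
    · intro a b ha hb hab hQ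
      rw [hu1 a b hab ha.1 hb.1, if_pos ⟨ha.2, hb.2⟩]; exact hQ
    · intro a b ha hb hba hQ
      have h := hu1 b a hba hb.1 ha.1
      rw [if_pos ⟨hb.2, ha.2⟩] at h
      rw [← h]; exact hQ
  have hVne : ∀ x, x ∈ Jb → Φ.Ω ε x ∈ A → V x ≠ 0 := by
    intro x hxJ hxA
    refine zigzag_prop c2 (Q := fun z => V z ≠ 0) ?_ ?_
      (show Φ.Ω ε p₀ ∈ _ from ⟨hpJ, hp2⟩) (show x ∈ _ from ⟨hxJ, hxA⟩) hV0
    · intro a b ha hb hab hQ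
      rw [hv1 a b hab ha.1 hb.1, if_pos ⟨ha.2, hb.2⟩]; exact hQ
    · intro a b ha hb hba hQ
      have h := hv1 b a hba hb.1 ha.1
      rw [if_pos ⟨hb.2, ha.2⟩] at h
      rw [← h]; exact hQ
  -- validity facts
  have alpha1 : ∀ q w, q ≤ w → q ∈ A → w ∈ A → Φ.Ω ε w ∈ Jb → Φ.Ω ε q ∈ Jb := by
    intro q w hqw hq hw hwB
    by_contra hqB
    have h := hu1 q w hqw hq hw
    rw [if_neg (fun hc => hqB hc.1)] at h
    exact hUne w hw hwB h
  have alpha2 : ∀ w r, w ≤ r → w ∈ A → Φ.Ω ε w ∈ Jb → Φ.Ω ε r ∈ Jb → r ∈ A := by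
    intro w r hwr hw hwB hrB
    by_contra hr
    exact hUne w hw hwB (hu2 w r hwr hw hr hwB hrB)
  have beta1 : ∀ q w, q ≤ w → Φ.Ω ε q ∈ Jb → Φ.Ω ε w ∈ Jb → Φ.Ω ε (Φ.Ω ε w) ∈ A →
      Φ.Ω ε (Φ.Ω ε q) ∈ A := by
    intro q w hqw hq hw hw2
    by_contra hq2
    have h := hv1 (Φ.Ω ε q) (Φ.Ω ε w) (mono hqw) hq hw
    rw [if_neg (fun hc => hq2 hc.1)] at h
    exact hVne (Φ.Ω ε w) hw hw2 h
  have beta2 : ∀ w r, w ≤ r → Φ.Ω ε w ∈ Jb → Φ.Ω ε (Φ.Ω ε w) ∈ A →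
      Φ.Ω ε (Φ.Ω ε r) ∈ A → Φ.Ω ε r ∈ Jb := by
    intro w r hwr hwB hw2 hr2
    by_contra hrB
    exact hVne (Φ.Ω ε w) hwB hw2 (hv2 (Φ.Ω ε w) (Φ.Ω ε r) (mono hwr) hwB hrB hw2 hr2)
  -- p₀ preliminaries
  have hp3J : Φ.Ω ε (Φ.Ω ε (Φ.Ω ε p₀)) ∈ Jb :=
    beta2 p₀ (Φ.Ω ε (Φ.Ω ε p₀)) ((le1 p₀).trans (le1 _)) hpJ hp2 hp4
  -- claim 1: A-long points are sent into Jb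
  have claim1 : ∀ z, z ∈ A → Φ.Ω ε (Φ.Ω ε z) ∈ A → Φ.Ω ε z ∈ Jb := by
    intro z hz hz2
    refine zigzag_prop c3 (Q := fun w => Φ.Ω ε w ∈ Jb) ?_ ?_
      (show p₀ ∈ _ from ⟨hpA, hp2⟩) (show z ∈ _ from ⟨hz, hz2⟩) hpJ
    · intro a b ha hb hab hQ
      exact beta2 a b hab hQ ha.2 hb.2
    · intro a b ha hb hba hQ
      exact alpha1 b a hba hb.1 ha.1 hQ
  -- claim 2: Jb-long points are sent into A
  have claim2 : ∀ z, z ∈ Jb → Φ.Ω ε (Φ.Ω ε z) ∈ Jb → Φ.Ω ε z ∈ A := by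
    intro z hz hz2
    refine zigzag_prop c4 (Q := fun w => Φ.Ω ε w ∈ A) ?_ ?_
      (show Φ.Ω ε p₀ ∈ _ from ⟨hpJ, hp3J⟩) (show z ∈ _ from ⟨hz, hz2⟩) hp2
    · intro a b ha hb hab hQ
      exact alpha2 (Φ.Ω ε a) (Φ.Ω ε b) (mono hab) hQ ha.2 hb.2
    · intro a b ha hb hba hQ
      have h := beta1 (Φ.Ω (-ε) b) (Φ.Ω (-ε) a) (Φ.mono (-ε) hba)
        (by rw [Φ.omega_omega_neg]; exact hb.1)
        (by rw [Φ.omega_omega_neg]; exact ha.1)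
        (by rw [Φ.omega_omega_neg]; exact hQ)
      rwa [Φ.omega_omega_neg] at h
  -- the canonical morphisms
  have hCF : ∀ z, matchedF Φ ε A Jb z → Φ.Ω (ε + ε) z ∈ Jb := fun z h => by
    rw [Φ.add]; exact h.2.2
  have hCG : ∀ z, matchedG Φ ε A Jb z → Φ.Ω (ε + ε) z ∈ A := fun z h => by
    rw [Φ.add]; exact h.2.2
  refine ⟨{ app := fun x => ModuleCat.ofHom (tmap K x (Φ.Ω (ε + ε) x) (matchedF Φ ε A Jb x) (hCF x)), naturality := ?_ },
          { app := fun y => ModuleCat.ofHom (tmap K y (Φ.Ω (ε + ε) y) (matchedG Φ ε A Jb y) (hCG y)), naturality := ?_ },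
          ?_, ?_⟩
  · -- naturality of F
    intro x y h
    have hxy : x ≤ y := leOfHom h
    refine ModuleCat.hom_ext (stalk_ext K fun u => ?_)
    trans ((tmap K y (Φ.Ω (ε + ε) y) (matchedF Φ ε A Jb y) (hCF y)) (charMap K A x y u) : K)
    · rfl
    trans ((charMap K Jb (Φ.Ω (ε + ε) x) (Φ.Ω (ε + ε) y))
          ((tmap K x (Φ.Ω (ε + ε) x) (matchedF Φ ε A Jb x) (hCF x)) u) : K)
    swap
    · rfl
    rw [tmap_val, charMap_val, charMap_val, tmap_val, ite_ite_and, ite_ite_and]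
    refine if_congr ?_ rfl rfl
    simp only [Φ.add, matchedF]
    constructor
    · rintro ⟨⟨hyA, hy1, hy2⟩, hxA, _⟩
      have hx1 : Φ.Ω ε x ∈ Jb := alpha1 x y hxy hxA hyA hy1
      have hx2 : Φ.Ω ε (Φ.Ω ε x) ∈ Jb := hJ.1 hx1 hy2 (le1 _) (mono (mono hxy))
      exact ⟨⟨hx2, hy2⟩, hxA, hx1, hx2⟩
    · rintro ⟨⟨_, hy2⟩, hxA, hx1, hx2⟩
      have hy1 : Φ.Ω ε y ∈ Jb := hJ.1 hx1 hy2 (mono hxy) (le1 _)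
      have hyA : y ∈ A := alpha2 x y hxy hxA hx1 hy1
      exact ⟨⟨hyA, hy1, hy2⟩, hxA, hyA⟩
  · -- naturality of G
    intro x y h
    have hxy : x ≤ y := leOfHom h
    refine ModuleCat.hom_ext (stalk_ext K fun u => ?_)
    trans ((tmap K y (Φ.Ω (ε + ε) y) (matchedG Φ ε A Jb y) (hCG y)) (charMap K Jb x y u) : K)
    · rfl
    trans ((charMap K A (Φ.Ω (ε + ε) x) (Φ.Ω (ε + ε) y))
          ((tmap K x (Φ.Ω (ε + ε) x) (matchedG Φ ε A Jb x) (hCG x)) u) : K)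
    swap
    · rfl
    rw [tmap_val, charMap_val, charMap_val, tmap_val, ite_ite_and, ite_ite_and]
    refine if_congr ?_ rfl rfl
    simp only [Φ.add, matchedG]
    constructor
    · rintro ⟨⟨hyJ, hy1, hy2⟩, hxJ, _⟩
      have hx1 : Φ.Ω ε x ∈ Jb := hJ.1 hxJ hy1 (le1 x) (mono hxy)
      have hx2 : Φ.Ω ε (Φ.Ω ε x) ∈ A := beta1 x y hxy hx1 hy1 hy2
      exact ⟨⟨hx2, hy2⟩, hxJ, hx1, hx2⟩
    · rintro ⟨⟨_, hy2⟩, hxJ, hx1, hx2⟩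
      have hy1 : Φ.Ω ε y ∈ Jb := beta2 x y hxy hx1 hx2 hy2
      have hyJ : y ∈ Jb := hJ.1 hxJ hy1 hxy (le1 y)
      exact ⟨⟨hyJ, hy1, hy2⟩, hxJ, hyJ⟩
  · -- first interleaving identity
    intro p
    refine ModuleCat.hom_ext (stalk_ext K fun u => ?_)
    trans ((tmap K (Φ.Ω (ε + ε) p) (Φ.Ω (ε + ε) (Φ.Ω (ε + ε) p)) (matchedG Φ ε A Jb (Φ.Ω (ε + ε) p))
            (hCG (Φ.Ω (ε + ε) p))) ((tmap K p (Φ.Ω (ε + ε) p) (matchedF Φ ε A Jb p) (hCF p)) u) : K)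
    · rfl
    trans ((charMap K A p (Φ.Ω (ε + ε) (Φ.Ω (ε + ε) p))) u : K)
    swap
    · rfl
    rw [tmap_val, tmap_val, charMap_val, ite_ite_and]
    refine if_congr ?_ rfl rfl
    simp only [Φ.add, matchedF, matchedG]
    constructor
    · rintro ⟨⟨hg1, hg2, hg3⟩, hpA', _, _⟩
      exact ⟨hpA', hg3⟩
    · rintro ⟨hpA', hp4'⟩
      have h2A : Φ.Ω ε (Φ.Ω ε p) ∈ A :=
        hA.1 hpA' hp4' ((le1 p).trans (le1 _)) ((le1 _).trans (le1 _))
      have h1A : Φ.Ω ε p ∈ A := hA.1 hpA' hp4' (le1 p) ((le1 _).trans ((le1 _).trans (le1 _)))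
      have h3A : Φ.Ω ε (Φ.Ω ε (Φ.Ω ε p)) ∈ A := hA.1 h1A hp4' ((le1 _).trans (le1 _)) (le1 _)
      have h1J : Φ.Ω ε p ∈ Jb := claim1 p hpA' h2A
      have h2J : Φ.Ω ε (Φ.Ω ε p) ∈ Jb := claim1 _ h1A h3A
      have h3J : Φ.Ω ε (Φ.Ω ε (Φ.Ω ε p)) ∈ Jb := claim1 _ h2A hp4'
      exact ⟨⟨h2J, h3J, hp4'⟩, hpA', h1J, h2J⟩
  · -- second interleaving identity
    intro p
    refine ModuleCat.hom_ext (stalk_ext K fun u => ?_)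
    trans ((tmap K (Φ.Ω (ε + ε) p) (Φ.Ω (ε + ε) (Φ.Ω (ε + ε) p)) (matchedF Φ ε A Jb (Φ.Ω (ε + ε) p))
            (hCF (Φ.Ω (ε + ε) p))) ((tmap K p (Φ.Ω (ε + ε) p) (matchedG Φ ε A Jb p) (hCG p)) u) : K)
    · rfl
    trans ((charMap K Jb p (Φ.Ω (ε + ε) (Φ.Ω (ε + ε) p))) u : K)
    swap
    · rfl
    rw [tmap_val, tmap_val, charMap_val, ite_ite_and]
    refine if_congr ?_ rfl rfl
    simp only [Φ.add, matchedF, matchedG]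
    constructor
    · rintro ⟨⟨hf1, hf2, hf3⟩, hpJ', _, _⟩
      exact ⟨hpJ', hf3⟩
    · rintro ⟨hpJ', hp4'⟩
      have h1J : Φ.Ω ε p ∈ Jb := hJ.1 hpJ' hp4' (le1 p) ((le1 _).trans ((le1 _).trans (le1 _)))
      have h3J : Φ.Ω ε (Φ.Ω ε (Φ.Ω ε p)) ∈ Jb :=
        hJ.1 hpJ' hp4' ((le1 p).trans ((le1 _).trans (le1 _))) (le1 _)
      have h2A : Φ.Ω ε (Φ.Ω ε p) ∈ A := claim2 (Φ.Ω ε p) h1J h3J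
      exact ⟨⟨h2A, h3J, hp4'⟩, hpJ', h1J, h2A⟩
  
end Core

section Extract

/-- A morphism into a shifted barcode module, viewed pointwise as a linear map of dfinsupps. -/
noncomputable def happ (Φ : RFlow P) (ε : ℝ) (D1 D2 : Barcode P)
    (h' : bcMod K D1 ⟶ Pshift K Φ ε (bcMod K D2)) (x : P) :
    (Π₀ i : D1.ι, ↥(charSub K (D1.B i) x)) →ₗ[K]
      (Π₀ j : D2.ι, ↥(charSub K (D2.B j) (Φ.Ω ε x))) :=
  (h'.app x).hom

/-- The structure map of a barcode module as a linear map of dfinsupps. -/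
noncomputable def bmap (D : Barcode P) (x y : P) :
    (Π₀ i : D.ι, ↥(charSub K (D.B i) x)) →ₗ[K] (Π₀ i : D.ι, ↥(charSub K (D.B i) y)) :=
  DFinsupp.mapRange.linearMap (fun i => charMap K (D.B i) x y)

lemma bmap_single (D : Barcode P) (x y : P) (i : D.ι) (u : ↥(charSub K (D.B i) x)) :
    bmap K D x y (DFinsupp.single i u) = DFinsupp.single i (charMap K (D.B i) x y u) := by
  classical
  exact DFinsupp.mapRange_single (f := fun i => charMap K (D.B i) x y) (hf := fun i => map_zero _)

lemma bmap_apply (D : Barcode P) (x y : P) (v : Π₀ i : D.ι, ↥(charSub K (D.B i) x)) (j : D.ι) :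
    (bmap K D x y v) j = charMap K (D.B j) x y (v j) := by
  exact DFinsupp.mapRange_apply (fun i => charMap K (D.B i) x y) (fun i => map_zero _) v j

/-- Pointwise naturality of interleaving morphisms on matrix entries. -/
lemma entry_nat (Φ : RFlow P) {ε : ℝ} {D1 D2 : Barcode P}
    (h' : bcMod K D1 ⟶ Pshift K Φ ε (bcMod K D2))
    (i : D1.ι) (j : D2.ι) {x y : P} (hxy : x ≤ y) (u : ↥(charSub K (D1.B i) x)) :
    (happ K Φ ε D1 D2 h' y (DFinsupp.single i (charMap K (D1.B i) x y u))) j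
      = charMap K (D2.B j) (Φ.Ω ε x) (Φ.Ω ε y)
          ((happ K Φ ε D1 D2 h' x (DFinsupp.single i u)) j) := by
  have h0 := DFunLike.congr_fun (congrArg ModuleCat.Hom.hom (h'.naturality (homOfLE hxy))) (DFinsupp.single i u)
  have h4 : happ K Φ ε D1 D2 h' y (bmap K D1 x y (DFinsupp.single i u))
      = bmap K D2 (Φ.Ω ε x) (Φ.Ω ε y) (happ K Φ ε D1 D2 h' x (DFinsupp.single i u)) := h0
  rw [bmap_single] at h4
  rw [h4, bmap_apply]

/-- Extraction of nonvanishing matrix entries from an interleaving relation. -/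
lemma extract (Φ : RFlow P) {ε : ℝ} (hε : 0 ≤ ε) (DM DN : Barcode P)
    (f' : bcMod K DM ⟶ Pshift K Φ ε (bcMod K DN))
    (g' : bcMod K DN ⟶ Pshift K Φ ε (bcMod K DM))
    (hfg : ∀ p : P, f'.app p ≫ g'.app (Φ.Ω ε p) =
      (bcMod K DM).map (homOfLE (Φ.self_le_twice hε p)))
    (a : DM.ι) (p₀ : P) (hpA : p₀ ∈ DM.B a)
    (hp2 : Φ.Ω ε (Φ.Ω ε p₀) ∈ DM.B a) :
    ∃ (b : DN.ι) (U V : P → K),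
      (∀ x y, x ≤ y → x ∈ DM.B a → y ∈ DM.B a →
        U y = if (Φ.Ω ε x ∈ DN.B b ∧ Φ.Ω ε y ∈ DN.B b) then U x else 0) ∧
      (∀ x y, x ≤ y → x ∈ DM.B a → y ∉ DM.B a → Φ.Ω ε x ∈ DN.B b → Φ.Ω ε y ∈ DN.B b →
        U x = 0) ∧
      (∀ x y, x ≤ y → x ∈ DN.B b → y ∈ DN.B b →
        V y = if (Φ.Ω ε x ∈ DM.B a ∧ Φ.Ω ε y ∈ DM.B a) then V x else 0) ∧
      (∀ x y, x ≤ y → x ∈ DN.B b → y ∉ DN.B b → Φ.Ω ε x ∈ DM.B a → Φ.Ω ε y ∈ DM.B a →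
        V x = 0) ∧
      Φ.Ω ε p₀ ∈ DN.B b ∧ U p₀ ≠ 0 ∧ V (Φ.Ω ε p₀) ≠ 0 := by
  classical
  set UU : DN.ι → P → K := fun b x =>
    ((happ K Φ ε DM DN f' x (DFinsupp.single a (unitE K (DM.B a) x))) b : K) with hUU
  set VV : DN.ι → P → K := fun b y =>
    ((happ K Φ ε DN DM g' y (DFinsupp.single b (unitE K (DN.B b) y))) a : K) with hVV
  set Y := happ K Φ ε DM DN f' p₀ (DFinsupp.single a (unitE K (DM.B a) p₀)) with hY
  have h40 := DFunLike.congr_fun (congrArg ModuleCat.Hom.hom (hfg p₀)) (DFinsupp.single a (unitE K (DM.B a) p₀))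
  have h4 : happ K Φ ε DN DM g' (Φ.Ω ε p₀) Y
      = bmap K DM p₀ (Φ.Ω ε (Φ.Ω ε p₀)) (DFinsupp.single a (unitE K (DM.B a) p₀)) := h40
  have h5 : ((happ K Φ ε DN DM g' (Φ.Ω ε p₀) Y) a : K) = 1 := by
    rw [h4, bmap_single, DFinsupp.single_eq_same, charMap_val, if_pos ⟨hpA, hp2⟩,
      unitE_val K hpA]
  have hsum : ((happ K Φ ε DN DM g' (Φ.Ω ε p₀) Y) a : K)
      = ∑ b ∈ Y.support, (Y b : K) * VV b (Φ.Ω ε p₀) := by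
    conv_lhs => rw [← DFinsupp.sum_single (f := Y)]
    rw [DFinsupp.sum, map_sum, DFinsupp.finset_sum_apply, AddSubmonoidClass.coe_finset_sum]
    refine Finset.sum_congr rfl ?_
    intro b _
    by_cases hb : Φ.Ω ε p₀ ∈ DN.B b
    · have he : (DFinsupp.single b (Y b) : Π₀ j : DN.ι, ↥(charSub K (DN.B j) (Φ.Ω ε p₀)))
          = (Y b : K) • DFinsupp.single b (unitE K (DN.B b) (Φ.Ω ε p₀)) := by
        rw [← DFinsupp.single_smul]
        congr 1
        exact elt_eq_smul_unitE K hb (Y b)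
      rw [he, map_smul, DFinsupp.smul_apply, Submodule.coe_smul, smul_eq_mul]
    · have hz : Y b = 0 := charElt_eq_zero K hb (Y b)
      rw [hz, DFinsupp.single_zero, map_zero]
      have hz2 : (Y b : K) = 0 := by rw [hz]; rfl
      simp [hz2]
  rw [hsum] at h5
  have hex : ∃ b ∈ Y.support, (Y b : K) * VV b (Φ.Ω ε p₀) ≠ 0 := by
    apply Finset.exists_ne_zero_of_sum_ne_zero
    rw [h5]; exact one_ne_zero
  obtain ⟨b, _, hbne⟩ := hex
  have hYU : (Y b : K) = UU b p₀ := rfl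
  have hU0 : UU b p₀ ≠ 0 := fun h0 => hbne (by rw [hYU, h0, zero_mul])
  have hV0 : VV b (Φ.Ω ε p₀) ≠ 0 := fun h0 => hbne (by rw [h0, mul_zero])
  have hpJ : Φ.Ω ε p₀ ∈ DN.B b := by
    by_contra hq
    exact hU0 (by rw [hUU]; exact charSub_val_zero K hq _)
  refine ⟨b, UU b, VV b, ?_, ?_, ?_, ?_, hpJ, hU0, hV0⟩
  · intro x y hxy hx hy
    have h := entry_nat K Φ f' a b hxy (unitE K (DM.B a) x)
    rw [charMap_unitE K hx hy] at h
    have hval := congrArg (fun (z : ↥(charSub K (DN.B b) (Φ.Ω ε y))) => (z : K)) h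
    simpa [charMap_val, hUU] using hval
  · intro x y hxy hx hy h1 h2
    have h := entry_nat K Φ f' a b hxy (unitE K (DM.B a) x)
    rw [charMap_zero_of_not_mem K (fun hc => hy hc.2)] at h
    have hval := congrArg (fun (z : ↥(charSub K (DN.B b) (Φ.Ω ε y))) => (z : K)) h
    simp only [LinearMap.zero_apply, DFinsupp.single_zero, map_zero, DFinsupp.zero_apply,
      ZeroMemClass.coe_zero] at hval
    rw [charMap_val, if_pos ⟨h1, h2⟩] at hval
    exact hval.symm
  · intro x y hxy hx hy
    have h := entry_nat K Φ g' b a hxy (unitE K (DN.B b) x)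
    rw [charMap_unitE K hx hy] at h
    have hval := congrArg (fun (z : ↥(charSub K (DM.B a) (Φ.Ω ε y))) => (z : K)) h
    simpa [charMap_val, hVV] using hval
  · intro x y hxy hx hy h1 h2
    have h := entry_nat K Φ g' b a hxy (unitE K (DN.B b) x)
    rw [charMap_zero_of_not_mem K (fun hc => hy hc.2)] at h
    have hval := congrArg (fun (z : ↥(charSub K (DM.B a) (Φ.Ω ε y))) => (z : K)) h
    simp only [LinearMap.zero_apply, DFinsupp.single_zero, map_zero, DFinsupp.zero_apply,
      ZeroMemClass.coe_zero] at hval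
    rw [charMap_val, if_pos ⟨h1, h2⟩] at hval
    exact hval.symm

end Extract

section Master

lemma interleaved_symm (Φ : RFlow P) {ε : ℝ} (hε : 0 ≤ ε) {M N : P ⥤ ModuleCat K}
    (h : Interleaved K Φ hε M N) : Interleaved K Φ hε N M := by
  obtain ⟨f, g, h1, h2⟩ := h
  exact ⟨g, f, h2, h1⟩

lemma interleaved_cast (Φ : RFlow P) {ε₁ ε₂ : ℝ} (h : ε₁ = ε₂) (h₁ : 0 ≤ ε₁) (h₂ : 0 ≤ ε₂)
    {M N : P ⥤ ModuleCat K} (hh : Interleaved K Φ h₁ M N) : Interleaved K Φ h₂ M N := by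
  subst h; exact hh

lemma conn_inter_shift (Φ : RFlow P) {F : Set (Set P)} (hFiv : ∀ S ∈ F, IsInterval S)
    (hFcap : ∀ S ∈ F, ∀ T ∈ F, S ∩ T ∈ F) (hFflow : ∀ S ∈ F, ∀ t : ℝ, Φ.Ω t '' S ∈ F)
    {S T : Set P} (hS : S ∈ F) (hT : T ∈ F) (t : ℝ) :
    PosetConnected {z : P | z ∈ S ∧ Φ.Ω t z ∈ T} := by
  have h1 : Φ.shiftSet T t ∈ F := by
    rw [Φ.shiftSet_eq_image]; exact hFflow T hT (-t)
  have h2 : S ∩ Φ.shiftSet T t ∈ F := hFcap _ hS _ h1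
  exact (hFiv _ h2).2

lemma conn_inter_shift2 (Φ : RFlow P) {F : Set (Set P)} (hFiv : ∀ S ∈ F, IsInterval S)
    (hFcap : ∀ S ∈ F, ∀ T ∈ F, S ∩ T ∈ F) (hFflow : ∀ S ∈ F, ∀ t : ℝ, Φ.Ω t '' S ∈ F)
    {S : Set P} (hS : S ∈ F) (ε : ℝ) :
    PosetConnected {z : P | z ∈ S ∧ Φ.Ω ε (Φ.Ω ε z) ∈ S} := by
  have h := conn_inter_shift Φ hFiv hFcap hFflow hS hS (ε + ε)
  have he : {z : P | z ∈ S ∧ Φ.Ω (ε + ε) z ∈ S}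
      = {z : P | z ∈ S ∧ Φ.Ω ε (Φ.Ω ε z) ∈ S} := by
    ext z
    rw [Set.mem_setOf_eq, Set.mem_setOf_eq, Φ.add]
  rwa [he] at h

/-- The master lemma: a summand of `M` that survives four flow steps has a partner
in the barcode of `N` whose characteristic module is `(ε+ε)`-interleaved with it. -/
lemma exists_partner (Φ : RFlow P) {ε : ℝ} (hε : 0 ≤ ε)
    {F : Set (Set P)} (hFiv : ∀ S ∈ F, IsInterval S)
    (hFcap : ∀ S ∈ F, ∀ T ∈ F, S ∩ T ∈ F) (hFflow : ∀ S ∈ F, ∀ t : ℝ, Φ.Ω t '' S ∈ F)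
    (DM DN : Barcode P) (hBM : ∀ a : DM.ι, DM.B a ∈ F) (hBN : ∀ b : DN.ι, DN.B b ∈ F)
    (f' : bcMod K DM ⟶ Pshift K Φ ε (bcMod K DN))
    (g' : bcMod K DN ⟶ Pshift K Φ ε (bcMod K DM))
    (hfg : ∀ p : P, f'.app p ≫ g'.app (Φ.Ω ε p) =
      (bcMod K DM).map (homOfLE (Φ.self_le_twice hε p)))
    (a : DM.ι) (p₀ : P) (hpA : p₀ ∈ DM.B a)
    (hp4 : Φ.Ω ε (Φ.Ω ε (Φ.Ω ε (Φ.Ω ε p₀))) ∈ DM.B a) :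
    ∃ b : DN.ι, Interleaved K Φ (add_nonneg hε hε)
      (charMod K (DM.B a) (DM.interval a).1) (charMod K (DN.B b) (DN.interval b).1) := by
  have le1 : ∀ x : P, x ≤ Φ.Ω ε x := fun x => Φ.self_le hε x
  have hp2 : Φ.Ω ε (Φ.Ω ε p₀) ∈ DM.B a :=
    (DM.interval a).1 hpA hp4 ((le1 _).trans (le1 _)) ((le1 _).trans (le1 _))
  obtain ⟨b, U, V, hu1, hu2, hv1, hv2, hpJ, hU0, hV0⟩ :=
    extract K Φ hε DM DN f' g' hfg a p₀ hpA hp2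
  exact ⟨b, core_interleave K Φ hε (DM.interval a) (DN.interval b)
    (conn_inter_shift Φ hFiv hFcap hFflow (hBM a) (hBN b) ε)
    (conn_inter_shift Φ hFiv hFcap hFflow (hBN b) (hBM a) ε)
    (conn_inter_shift2 Φ hFiv hFcap hFflow (hBM a) ε)
    (conn_inter_shift2 Φ hFiv hFcap hFflow (hBN b) ε)
    U V hu1 hu2 hv1 hv2 p₀ hpA hpJ hp2 hp4 hU0 hV0⟩

/-- A `2ε`-trivial characteristic module is `ε`-interleaved with the zero module. -/
lemma interleaved_with_zero (Φ : RFlow P) {ε : ℝ} (hε : 0 ≤ ε) {S : Set P}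
    (hS : PosetConvex S)
    (htriv : ∀ p, p ∈ S → Φ.Ω ε (Φ.Ω ε p) ∈ S → False) :
    Interleaved K Φ hε (charMod K S hS) (zeroPMod K) := by
  refine ⟨{ app := fun x => 0, naturality := by intro x y h; simp },
          { app := fun x => 0, naturality := by intro x y h; simp }, ?_, ?_⟩
  · intro p
    refine ModuleCat.hom_ext (stalk_ext K fun u => ?_)
    trans (0 : K)
    · rfl
    trans ((charMap K S p (Φ.Ω ε (Φ.Ω ε p)) u : ↥(charSub K S (Φ.Ω ε (Φ.Ω ε p)))) : K)
    swap
    · rfl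
    rw [charMap_val, if_neg]
    rintro ⟨h1, h2⟩
    exact htriv p h1 h2
  · intro p
    refine ModuleCat.hom_ext (stalk_ext K fun u => ?_)
    trans (0 : K)
    · rfl
    trans ((charMap K (∅ : Set P) p (Φ.Ω ε (Φ.Ω ε p)) u :
        ↥(charSub K (∅ : Set P) (Φ.Ω ε (Φ.Ω ε p)))) : K)
    swap
    · rfl
    rw [charMap_val, if_neg]
    rintro ⟨h1, _⟩
    exact h1

lemma comp_iso_aux {C : Type*} [Category C] {X X' Z Z' V V' : C} (iM : X ≅ X') (fp : X ⟶ Z)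
    (eN : Z ≅ Z') (gp : Z ⟶ V) (eV : V ≅ V') (m : X ⟶ V) (m' : X' ⟶ V')
    (h1 : fp ≫ gp = m) (hnat : m ≫ eV.hom = iM.hom ≫ m') :
    (iM.inv ≫ fp ≫ eN.hom) ≫ (eN.inv ≫ gp ≫ eV.hom) = m' := by
  simp only [Category.assoc, Iso.hom_inv_id_assoc]
  rw [← Category.assoc fp, h1, hnat, Iso.inv_hom_id_assoc]

/-- Interleaving transfers along isomorphisms. -/
lemma interleaved_of_iso (Φ : RFlow P) {ε : ℝ} (hε : 0 ≤ ε)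
    {M M' N N' : P ⥤ ModuleCat K} (eM : M ≅ M') (eN : N ≅ N')
    (h : Interleaved K Φ hε M N) : Interleaved K Φ hε M' N' := by
  obtain ⟨f, g, h1, h2⟩ := h
  refine ⟨eM.inv ≫ f ≫ Functor.whiskerLeft (Φ.mono ε).functor eN.hom,
          eN.inv ≫ g ≫ Functor.whiskerLeft (Φ.mono ε).functor eM.hom, ?_, ?_⟩
  · intro p
    have hobj : ∀ q : P, (Φ.mono ε).functor.obj q = Φ.Ω ε q := fun _ => rfl
    have hnat := eM.hom.naturality (homOfLE (Φ.self_le_twice hε p))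
    exact comp_iso_aux (eM.app p) (f.app p) (eN.app (Φ.Ω ε p)) (g.app (Φ.Ω ε p))
      (eM.app (Φ.Ω ε (Φ.Ω ε p))) _ _ (h1 p) hnat
  · intro p
    have hobj : ∀ q : P, (Φ.mono ε).functor.obj q = Φ.Ω ε q := fun _ => rfl
    have hnat := eN.hom.naturality (homOfLE (Φ.self_le_twice hε p))
    exact comp_iso_aux (eN.app p) (g.app p) (eM.app (Φ.Ω ε p)) (f.app (Φ.Ω ε p))
      (eN.app (Φ.Ω ε (Φ.Ω ε p))) _ _ (h2 p) hnat

end Master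

section Final

/-- Existence of a `2ε`-correspondence from an `ε`-interleaving. -/
lemma exists_correspondence (Φ : RFlow P)
    {F : Set (Set P)} (hFiv : ∀ S ∈ F, IsInterval S)
    (hFcap : ∀ S ∈ F, ∀ T ∈ F, S ∩ T ∈ F) (hFflow : ∀ S ∈ F, ∀ t : ℝ, Φ.Ω t '' S ∈ F)
    (M N : P ⥤ ModuleCat K) (DM DN : Barcode P)
    (hM : IsDecompositionOf K DM M) (hN : IsDecompositionOf K DN N)
    (hBM : ∀ a : DM.ι, DM.B a ∈ F) (hBN : ∀ b : DN.ι, DN.B b ∈ F)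
    (e : NNReal) (hitl : Interleaved K Φ e.coe_nonneg M N) :
    ∃ σ : Set (DM.ι × DN.ι), IsCorrespondence K Φ (2 * e : NNReal).coe_nonneg DM DN σ := by
  classical
  obtain ⟨eM⟩ := hM
  obtain ⟨eN⟩ := hN
  have hMN' : Interleaved K Φ e.coe_nonneg (bcMod K DM) (bcMod K DN) :=
    interleaved_of_iso K Φ e.coe_nonneg eM eN hitl
  have hNM' : Interleaved K Φ e.coe_nonneg (bcMod K DN) (bcMod K DM) :=
    interleaved_symm K Φ e.coe_nonneg hMN'
  have h0 : (0:ℝ) ≤ (e : ℝ) := e.coe_nonneg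
  have hcast : (((2 * e : NNReal)) : ℝ) = (e : ℝ) + (e : ℝ) := by push_cast; ring
  have h4eq : ∀ q : P, Φ.Ω ((2 * e : NNReal) : ℝ) (Φ.Ω ((2 * e : NNReal) : ℝ) q)
      = Φ.Ω (e : ℝ) (Φ.Ω (e : ℝ) (Φ.Ω (e : ℝ) (Φ.Ω (e : ℝ) q))) := by
    intro q
    simp only [hcast, Φ.add]
  refine ⟨{ab : DM.ι × DN.ι | Interleaved K Φ (2 * e : NNReal).coe_nonneg
      (charMod K (DM.B ab.1) (DM.interval ab.1).1)
      (charMod K (DN.B ab.2) (DN.interval ab.2).1)}, ?_, ?_, ?_⟩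
  · intro ab hab
    exact hab
  · intro a ha
    by_cases htr : ∃ p, p ∈ DM.B a ∧
        Φ.Ω ((2 * e : NNReal) : ℝ) (Φ.Ω ((2 * e : NNReal) : ℝ) p) ∈ DM.B a
    · exfalso
      obtain ⟨p₀, hp1, hp4⟩ := htr
      rw [h4eq] at hp4
      obtain ⟨f', g', hfg, _⟩ := hMN'
      obtain ⟨b, hb⟩ := exists_partner K Φ h0 hFiv hFcap hFflow DM DN hBM hBN
        f' g' hfg a p₀ hp1 hp4
      exact ha b (interleaved_cast K Φ hcast.symm (add_nonneg h0 h0)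
        (2 * e : NNReal).coe_nonneg hb)
    · exact interleaved_with_zero K Φ (2 * e : NNReal).coe_nonneg (DM.interval a).1
        (fun p h1 h2 => htr ⟨p, h1, h2⟩)
  · intro b hb
    by_cases htr : ∃ p, p ∈ DN.B b ∧
        Φ.Ω ((2 * e : NNReal) : ℝ) (Φ.Ω ((2 * e : NNReal) : ℝ) p) ∈ DN.B b
    · exfalso
      obtain ⟨p₀, hp1, hp4⟩ := htr
      rw [h4eq] at hp4
      obtain ⟨f', g', hfg, _⟩ := hNM'
      obtain ⟨a, ha⟩ := exists_partner K Φ h0 hFiv hFcap hFflow DN DM hBN hBM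
        f' g' hfg b p₀ hp1 hp4
      exact hb a (interleaved_symm K Φ _ (interleaved_cast K Φ hcast.symm (add_nonneg h0 h0)
        (2 * e : NNReal).coe_nonneg ha))
    · exact interleaved_symm K Φ _
        (interleaved_with_zero K Φ (2 * e : NNReal).coe_nonneg (DN.interval b).1
          (fun p h1 h2 => htr ⟨p, h1, h2⟩))

end Final

/-- Main theorem: Hausdorff stability of barcodes.
If `F` is a family of intervals containing the empty interval, closed under pairwise
intersections and under the action of the flow, and `M`, `N` are interval-decomposable
with barcodes contained in `F`, then `d_H(M,N) ≤ 2 ⬝ d_I(M,N)`. -/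
theorem hausdorff_stability (Φ : RFlow P)
    (F : Set (Set P)) (hFiv : ∀ S ∈ F, IsInterval S) (hFempty : (∅ : Set P) ∈ F)
    (hFcap : ∀ S ∈ F, ∀ T ∈ F, S ∩ T ∈ F)
    (hFflow : ∀ S ∈ F, ∀ t : ℝ, Φ.Ω t '' S ∈ F)
    (M N : P ⥤ ModuleCat K) (DM DN : Barcode P)
    (hM : IsDecompositionOf K DM M) (hN : IsDecompositionOf K DN N)
    (hBM : ∀ a : DM.ι, DM.B a ∈ F) (hBN : ∀ b : DN.ι, DN.B b ∈ F) :
    dH K Φ DM DN ≤ 2 * dI K Φ M N := by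
  have key : ∀ e : NNReal, Interleaved K Φ e.coe_nonneg M N →
      dH K Φ DM DN ≤ ((2 * e : NNReal) : ℝ≥0∞) := by
    intro e he
    obtain ⟨σ, hσ⟩ := exists_correspondence K Φ hFiv hFcap hFflow M N DM DN hM hN hBM hBN e he
    exact iInf_le_of_le (2 * e) (iInf_le_of_le ⟨σ, hσ⟩ le_rfl)
  unfold dI
  rw [ENNReal.mul_iInf_of_ne (by norm_num) (by norm_num)]
  refine le_iInf fun e => ?_
  rw [ENNReal.mul_iInf_of_ne (by norm_num) (by norm_num)]
  refine le_iInf fun he => ?_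
  refine le_trans (key e he) ?_
  rw [ENNReal.coe_mul]
  norm_num
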